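/- Let k be a field of characteristic zero. On X = Spec k[x,t,u,v,ω]/(v^2 t^3 − x^2 u − 1), for every α ∈ k the k[x,t]-derivation δ_α = 2 v t^3 ∂/∂u + x^2 ∂/∂v + (½(1 + α t) x − t^3) ∂/∂ω is a well-defined locally nilpotent derivation of the coordinate ring. -/

import Mathlib

open MvPolynomial

set_option synthInstance.maxHeartbeats 1000000
set_option maxHeartbeats 1000000

/-- Iterated Leibniz rule: a product of locally nilpotent elements is nilpotent. -/
lemma stmt17_nil_mul {k R : Type*} [CommRing k] [CommRing R] [Algebra k R]
    (D : Derivation k R R) :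
    ∀ (K m n : ℕ) (p q : R), m + n = K →
      (D.toLinearMap ^ m) p = 0 → (D.toLinearMap ^ n) q = 0 →
      (D.toLinearMap ^ (m + n)) (p * q) = 0 := by
  intro K
  induction K with
  | zero =>
    intro m n p q h hp hq
    obtain ⟨rfl, rfl⟩ := Nat.add_eq_zero.mp h
    simp only [pow_zero, Module.End.one_apply] at hp hq ⊢
    rw [hp, zero_mul, map_zero]
  | succ K ih =>
    intro m n p q h hp hq
    match m, n with
    | 0, n =>
      simp only [pow_zero, Module.End.one_apply] at hp
      rw [hp, zero_mul, map_zero]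
    | m + 1, 0 =>
      simp only [pow_zero, Module.End.one_apply] at hq
      rw [hq, mul_zero, map_zero]
    | m + 1, n + 1 =>
      have hDp : (D.toLinearMap ^ m) (D p) = 0 := by
        rw [show (D p : R) = D.toLinearMap p from rfl, ← Module.End.mul_apply,
          ← pow_succ]; exact hp
      have hDq : (D.toLinearMap ^ n) (D q) = 0 := by
        rw [show (D q : R) = D.toLinearMap q from rfl, ← Module.End.mul_apply,
          ← pow_succ]; exact hq
      have e : m + 1 + (n + 1) = (m + 1 + n) + 1 := by omega
      rw [e, pow_succ, Module.End.mul_apply]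
      have : (D.toLinearMap) (p * q) = p * D q + q * D p := by
        rw [show (D.toLinearMap) (p * q) = D (p * q) from rfl, D.leibniz,
          smul_eq_mul, smul_eq_mul]
      rw [this, map_add]
      have h1 : (D.toLinearMap ^ (m + 1 + n)) (p * D q) = 0 :=
        ih (m + 1) n p (D q) (by omega) hp hDq
      have h2 : (D.toLinearMap ^ (m + 1 + n)) (q * D p) = 0 := by
        have := ih (n + 1) m q (D p) (by omega) hq hDp
        rwa [show n + 1 + m = m + 1 + n from by omega] at this
      rw [h1, h2, add_zero]

lemma stmt17_nil_mono {k R : Type*} [CommRing k] [CommRing R] [Algebra k R]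
    (D : Derivation k R R) {N M : ℕ} (h : N ≤ M) {p : R}
    (hp : (D.toLinearMap ^ N) p = 0) : (D.toLinearMap ^ M) p = 0 := by
  rw [show M = (M - N) + N from by omega, pow_add, Module.End.mul_apply, hp, map_zero]

/-- If a derivation of a polynomial ring kills each variable after finitely many steps,
it is locally nilpotent. -/
lemma stmt17_nil_poly {k σ : Type*} [CommRing k]
    (D : Derivation k (MvPolynomial σ k) (MvPolynomial σ k))
    (h : ∀ i, ∃ N, (D.toLinearMap ^ N) (X i) = 0) :
    ∀ p, ∃ N, (D.toLinearMap ^ N) p = 0 := by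
  intro p
  induction p using MvPolynomial.induction_on with
  | C a =>
    exact ⟨1, by simp only [pow_one]; exact MvPolynomial.derivation_C D a⟩
  | add p q hp hq =>
    obtain ⟨N, hN⟩ := hp; obtain ⟨M, hM⟩ := hq
    exact ⟨max N M, by
      rw [map_add, stmt17_nil_mono D (le_max_left N M) hN,
        stmt17_nil_mono D (le_max_right N M) hM, add_zero]⟩
  | mul_X p i hp =>
    obtain ⟨N, hN⟩ := hp; obtain ⟨M, hM⟩ := h i
    exact ⟨N + M, stmt17_nil_mul D (N + M) N M p (X i) rfl hN hM⟩

/-- On `X = Spec k[x,t,u,v,ω]/(v² t³ − x² u − 1)`, for every `α ∈ k` the `k[x,t]`-derivation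
`δ_α = 2 v t³ ∂/∂u + x² ∂/∂v + (½(1 + α t) x − t³) ∂/∂ω` is a well-defined locally
nilpotent derivation of the coordinate ring.
Variables: `X 0 = x`, `X 1 = t`, `X 2 = u`, `X 3 = v`, `X 4 = ω`. -/
theorem stmt17 (k : Type) [Field k] [CharZero k] (α : k)
    (I : Ideal (MvPolynomial (Fin 5) k))
    (hI : I = Ideal.span {(X 3 ^ 2 * X 1 ^ 3 - X 0 ^ 2 * X 2 - 1 : MvPolynomial (Fin 5) k)}) :
    (mkDerivation k
        (![0, 0, 2 * X 3 * X 1 ^ 3, X 0 ^ 2,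
           C ((2 : k)⁻¹) * (1 + C α * X 1) * X 0 - X 1 ^ 3] :
          Fin 5 → MvPolynomial (Fin 5) k))
      (X 3 ^ 2 * X 1 ^ 3 - X 0 ^ 2 * X 2 - 1) = 0 ∧
    ∃ D' : Derivation k (MvPolynomial (Fin 5) k ⧸ I) (MvPolynomial (Fin 5) k ⧸ I),
      (∀ p : MvPolynomial (Fin 5) k,
        D' (Ideal.Quotient.mk I p) =
          Ideal.Quotient.mk I
            ((mkDerivation k
              (![0, 0, 2 * X 3 * X 1 ^ 3, X 0 ^ 2,
                 C ((2 : k)⁻¹) * (1 + C α * X 1) * X 0 - X 1 ^ 3] :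
                Fin 5 → MvPolynomial (Fin 5) k)) p)) ∧
      (∀ a, ∃ N : ℕ, (⇑D')^[N] a = 0) := by
  set D : Derivation k (MvPolynomial (Fin 5) k) (MvPolynomial (Fin 5) k) :=
    mkDerivation k
      (![0, 0, 2 * X 3 * X 1 ^ 3, X 0 ^ 2,
         C ((2 : k)⁻¹) * (1 + C α * X 1) * X 0 - X 1 ^ 3] :
        Fin 5 → MvPolynomial (Fin 5) k) with hD
  have key : D (X 3 ^ 2 * X 1 ^ 3 - X 0 ^ 2 * X 2 - 1) = 0 := by
    simp [hD, Derivation.leibniz, Derivation.leibniz_pow, mkDerivation_X, smul_eq_mul]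
    ring
  refine ⟨key, ?_⟩
  -- the derivation maps the ideal into itself
  have hDI : ∀ p ∈ I, D p ∈ I := by
    intro p hp
    rw [hI, Ideal.mem_span_singleton] at hp
    obtain ⟨f, rfl⟩ := hp
    rw [D.leibniz, key, smul_zero, add_zero, smul_eq_mul, hI, Ideal.mem_span_singleton]
    exact ⟨D f, rfl⟩
  -- local nilpotency on the polynomial ring
  have h0 : D.toLinearMap (X 0) = 0 := by simp [hD, mkDerivation_X]
  have h1 : D.toLinearMap (X 1) = 0 := by simp [hD, mkDerivation_X]
  have h3 : (D.toLinearMap ^ 2) (X 3) = 0 := by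
    rw [pow_two, Module.End.mul_apply]
    show D (D (X 3)) = 0
    simp [hD, Derivation.leibniz, Derivation.leibniz_pow, mkDerivation_X]
  have h4 : (D.toLinearMap ^ 2) (X 4) = 0 := by
    rw [pow_two, Module.End.mul_apply]
    show D (D (X 4)) = 0
    simp [hD, Derivation.leibniz, Derivation.leibniz_pow, mkDerivation_X, derivation_C]
  have hc2 : D (2 : MvPolynomial (Fin 5) k) = 0 := by
    rw [show (2 : MvPolynomial (Fin 5) k) = C (2 : k) from (map_ofNat C 2).symm]
    exact derivation_C D 2
  have h2 : (D.toLinearMap ^ 3) (X 2) = 0 := by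
    rw [pow_succ, pow_two, Module.End.mul_apply, Module.End.mul_apply]
    show D (D (D (X 2))) = 0
    rw [hD] at hc2
    simp [hD, Derivation.leibniz, Derivation.leibniz_pow, mkDerivation_X, smul_eq_mul, hc2]
  have hvars : ∀ i : Fin 5, ∃ N, (D.toLinearMap ^ N) (X i) = 0 := by
    intro i
    fin_cases i
    · exact ⟨1, by rw [pow_one]; exact h0⟩
    · exact ⟨1, by rw [pow_one]; exact h1⟩
    · exact ⟨3, h2⟩
    · exact ⟨2, h3⟩
    · exact ⟨2, h4⟩
  have hnil := stmt17_nil_poly D hvars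
  -- construct the quotient derivation
  have hresp : ∀ a b : MvPolynomial (Fin 5) k, Submodule.quotientRel I a b →
      Ideal.Quotient.mk I (D a) = Ideal.Quotient.mk I (D b) := by
    intro a b hab
    rw [Submodule.quotientRel_def] at hab
    rw [Ideal.Quotient.mk_eq_mk_iff_sub_mem, ← map_sub]
    exact hDI _ hab
  set f : (MvPolynomial (Fin 5) k ⧸ I) → (MvPolynomial (Fin 5) k ⧸ I) :=
    fun a => Quotient.liftOn' a (fun p => Ideal.Quotient.mk I (D p)) hresp with hf
  have hfmk : ∀ p, f (Ideal.Quotient.mk I p) = Ideal.Quotient.mk I (D p) := fun p => rfl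
  have hsurj := Ideal.Quotient.mk_surjective (I := I)
  refine ⟨{ toFun := f, map_add' := ?_, map_smul' := ?_, map_one_eq_zero' := ?_,
            leibniz' := ?_ }, ?_, ?_⟩
  · intro a b
    obtain ⟨p, rfl⟩ := hsurj a; obtain ⟨q, rfl⟩ := hsurj b
    rw [← map_add, hfmk, hfmk, hfmk, map_add, map_add]
  · intro c a
    obtain ⟨p, rfl⟩ := hsurj a
    simp only [RingHom.id_apply]
    rw [show c • (Ideal.Quotient.mk I p) = Ideal.Quotient.mk I (c • p) from
      map_smul (Ideal.Quotient.mkₐ k I) c p ▸ rfl]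
    rw [hfmk, hfmk, D.map_smul]
    exact (map_smul (Ideal.Quotient.mkₐ k I) c (D p)).symm ▸ rfl
  · show f 1 = 0
    rw [show (1 : MvPolynomial (Fin 5) k ⧸ I) = Ideal.Quotient.mk I 1 from rfl, hfmk,
      D.map_one_eq_zero, map_zero]
  · intro a b
    show f (a * b) = a • f b + b • f a
    obtain ⟨p, rfl⟩ := hsurj a; obtain ⟨q, rfl⟩ := hsurj b
    rw [← map_mul, hfmk, hfmk, hfmk, D.leibniz, map_add, smul_eq_mul, smul_eq_mul,
      map_mul, map_mul, smul_eq_mul, smul_eq_mul]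
  · intro p
    exact hfmk p
  · -- local nilpotency on the quotient
    have hiter : ∀ (n : ℕ) (p : MvPolynomial (Fin 5) k),
        f^[n] (Ideal.Quotient.mk I p) = Ideal.Quotient.mk I ((D.toLinearMap ^ n) p) := by
      intro n
      induction n with
      | zero => intro p; simp
      | succ n ih =>
        intro p
        rw [Function.iterate_succ_apply, hfmk, ih, pow_succ, Module.End.mul_apply]
        rfl
    intro a
    obtain ⟨p, rfl⟩ := hsurj a
    obtain ⟨N, hN⟩ := hnil p
    exact ⟨N, by show f^[N] _ = 0; rw [hiter, hN, map_zero]⟩
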